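/- Let χ : ℝ → ℂ be a Schwartz function, (e₁,e₂,e₃) the standard basis of ℝ³ and × the cross product. For x ∈ ℝ³ and m ∈ {1,2,3} define B_{mx}(k) := i·(2π)^{−3/2}·χ(|k|)·|k|^{1/2}·e^{−i k·x}·(k×e_m)/|k| for k ≠ 0, E_{mx}(k) := (k × B_{mx}(k))/|k|, and ρ(x) := (2π)^{−3}·∫_{ℝ³} |χ(|k|)|²·cos(k·x) dk. Then: (a) B_{mx} and E_{mx} belong to L²(ℝ³, ℂ³); (b) ρ is well defined and differentiable on ℝ³ with ∇ρ(x) = −(2π)^{−3}·∫_{ℝ³} |χ(|k|)|²·sin(k·x)·k dk; (c) for all x, y ∈ ℝ³ and m, n ∈ {1,2,3}, Im⟨E_{mx}, B_{ny}⟩_{L²(ℝ³,ℂ³)} = ∇ρ(x−y)·(e_m × e_n), and Im⟨B_{mx}, B_{ny}⟩_{L²(ℝ³,ℂ³)} = 0. -/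

import Mathlib

open scoped BigOperators
open MeasureTheory

noncomputable section

/-- Points of `ℝ³`. -/
abbrev V3 : Type := Fin 3 → ℝ

/-- The Euclidean norm `|k|` on `ℝ³`. -/
def enorm3 (k : V3) : ℝ := Real.sqrt (∑ i : Fin 3, k i ^ 2)

/-- The Euclidean scalar product `k·x` on `ℝ³`. -/
def dot3 (k x : V3) : ℝ := ∑ i : Fin 3, k i * x i

/-- The standard basis vector `e_m` of `ℝ³`. -/
def stdb (m : Fin 3) : V3 := Pi.single m 1

/-- Cross product of a real vector with a complex vector, componentwise. -/
def crossC (k : V3) (v : Fin 3 → ℂ) : Fin 3 → ℂ :=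
  crossProduct (fun i => (k i : ℂ)) v

/-- The one-photon magnetic field element
`B_{mx}(k) = i (2π)^{-3/2} χ(|k|) |k|^{1/2} e^{-i k·x} (k × e_m)/|k|`. -/
def Bf (χ : SchwartzMap ℝ ℂ) (m : Fin 3) (x : V3) (k : V3) : Fin 3 → ℂ := fun i =>
  Complex.I * (((2 * Real.pi) ^ (3:ℕ) : ℝ) ^ (-(1:ℝ)/2) : ℝ) * χ (enorm3 k)
    * (Real.sqrt (enorm3 k) : ℝ) * Complex.exp (-Complex.I * (dot3 k x : ℝ))
    * ((crossProduct k (stdb m) i / enorm3 k : ℝ) : ℂ)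

/-- The one-photon electric field element `E_{mx}(k) = (k × B_{mx}(k))/|k|`. -/
def Ef (χ : SchwartzMap ℝ ℂ) (m : Fin 3) (x : V3) (k : V3) : Fin 3 → ℂ := fun i =>
  crossC k (Bf χ m x k) i / (enorm3 k : ℂ)

/-- The smeared delta function `ρ(x) = (2π)^{-3} ∫ |χ(|k|)|² cos(k·x) dk`. -/
def rho (χ : SchwartzMap ℝ ℂ) (x : V3) : ℝ :=
  (((2 * Real.pi) ^ (3:ℕ) : ℝ))⁻¹ * ∫ k : V3, ‖χ (enorm3 k)‖ ^ 2 * Real.cos (dot3 k x)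

/-- The gradient `∇ρ(x) = -(2π)^{-3} ∫ |χ(|k|)|² sin(k·x) k dk`, componentwise. -/
def gradRho (χ : SchwartzMap ℝ ℂ) (x : V3) : V3 := fun i =>
  -((((2 * Real.pi) ^ (3:ℕ) : ℝ))⁻¹ * ∫ k : V3, ‖χ (enorm3 k)‖ ^ 2 * Real.sin (dot3 k x) * k i)

/-- The Hermitian `L²(ℝ³,ℂ³)` pairing, antilinear in the second argument. -/
def innerL2 (f g : V3 → Fin 3 → ℂ) : ℂ :=
  ∫ k : V3, ∑ i : Fin 3, f k i * (starRingEnd ℂ) (g k i)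

lemma enorm3_nonneg (k : V3) : 0 ≤ enorm3 k := Real.sqrt_nonneg _
lemma enorm3_sq (k : V3) : enorm3 k ^ 2 = ∑ i : Fin 3, k i ^ 2 :=
  Real.sq_sqrt (by positivity)
lemma abs_le_enorm3 (k : V3) (i : Fin 3) : |k i| ≤ enorm3 k := by
  rw [← Real.sqrt_sq_eq_abs]
  exact Real.sqrt_le_sqrt (Finset.single_le_sum (f := fun j => k j ^ 2)
    (fun j _ => sq_nonneg _) (Finset.mem_univ i))
lemma norm_le_enorm3 (k : V3) : ‖k‖ ≤ enorm3 k := by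
  rw [pi_norm_le_iff_of_nonneg (enorm3_nonneg k)]
  intro i; simpa using abs_le_enorm3 k i
lemma enorm3_eq_zero {k : V3} (h : enorm3 k = 0) : k = 0 := by
  have h2 : (∑ i : Fin 3, k i ^ 2) = 0 := by
    have := enorm3_sq k; rw [h] at this; linarith
  funext i
  have := Finset.sum_eq_zero_iff_of_nonneg (fun j _ => sq_nonneg (k j)) |>.mp h2 i (Finset.mem_univ i)
  have : k i = 0 := by nlinarith
  simpa using this
lemma enorm3_neg (k : V3) : enorm3 (-k) = enorm3 k := by
  unfold enorm3; congr 1; apply Finset.sum_congr rfl; intro i _; simp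
lemma dot3_neg_left (k x : V3) : dot3 (-k) x = -dot3 k x := by
  unfold dot3; rw [← Finset.sum_neg_distrib]; apply Finset.sum_congr rfl; intro i _; simp [neg_mul]
lemma dot3_sub_right (k x y : V3) : dot3 k (x - y) = dot3 k x - dot3 k y := by
  unfold dot3; rw [← Finset.sum_sub_distrib]; apply Finset.sum_congr rfl; intro i _; simp [mul_sub]
lemma continuous_enorm3 : Continuous enorm3 := by
  apply Real.continuous_sqrt.comp
  exact continuous_finset_sum _ (fun i _ => (continuous_apply i).pow 2)
lemma continuous_dot3 (x : V3) : Continuous (fun k => dot3 k x) := by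
  exact continuous_finset_sum _ (fun i _ => (continuous_apply i).mul continuous_const)
lemma continuous_cross (v : V3) (i : Fin 3) : Continuous (fun k : V3 => crossProduct k v i) := by
  fin_cases i <;>
    simp [crossProduct] <;>
    exact ((continuous_apply _).mul continuous_const).sub ((continuous_apply _).mul continuous_const)

-- Schwartz decay: (1+r)^3 ‖χ r‖ ≤ D
lemma schwartz_cube_decay (χ : SchwartzMap ℝ ℂ) :
    ∃ D : ℝ, 0 < D ∧ ∀ r : ℝ, (1 + |r|) ^ 3 * ‖χ r‖ ≤ D := by
  obtain ⟨C0, hC0pos, hC0⟩ := χ.decay 0 0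
  obtain ⟨C3, hC3pos, hC3⟩ := χ.decay 3 0
  refine ⟨4 * (C0 + C3), by positivity, fun r => ?_⟩
  have h0 := hC0 r; have h3 := hC3 r
  rw [norm_iteratedFDeriv_zero] at h0 h3
  simp only [pow_zero, one_mul] at h0
  have hnr : ‖r‖ = |r| := rfl
  rw [hnr] at h3
  have habs : 0 ≤ |r| := abs_nonneg r
  have hnn : 0 ≤ ‖χ r‖ := norm_nonneg _
  nlinarith [sq_nonneg (1 - |r|), sq_nonneg (1 + |r|), mul_nonneg habs hnn,
    mul_nonneg (mul_nonneg habs habs) hnn, sq_nonneg ((1-|r|)*(1+|r|))]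

-- master integrability
lemma master_integrable (χ : SchwartzMap ℝ ℂ) :
    Integrable (fun k : V3 => ‖χ (enorm3 k)‖ ^ 2 * (1 + enorm3 k)) := by
  obtain ⟨D, hD, hdecay⟩ := schwartz_cube_decay χ
  have hint : Integrable (fun k : V3 => D ^ 2 * (1 + ‖k‖) ^ (-(4:ℝ))) := by
    apply Integrable.const_mul
    apply integrable_one_add_norm (μ := (volume : Measure V3)) (r := 4)
    norm_num
  apply Integrable.mono' hint
  · apply Continuous.aestronglyMeasurable
    apply Continuous.mul
    · exact (continuous_norm.comp (χ.continuous.comp continuous_enorm3)).pow 2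
    · exact continuous_const.add continuous_enorm3
  · filter_upwards with k
    set e := enorm3 k with he
    have he0 : 0 ≤ e := enorm3_nonneg k
    have hke : ‖k‖ ≤ e := norm_le_enorm3 k
    have hd : (1 + |e|) ^ 3 * ‖χ e‖ ≤ D := hdecay e
    rw [abs_of_nonneg he0] at hd
    have hnn : 0 ≤ ‖χ e‖ := norm_nonneg _
    have h1e : (0:ℝ) < 1 + e := by linarith
    have h1k : (0:ℝ) < 1 + ‖k‖ := by positivity
    have h1 : (1 + ‖k‖) ^ (-(4:ℝ)) = ((1 + ‖k‖) ^ (4:ℕ))⁻¹ := by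
      rw [← Real.rpow_natCast (1+‖k‖) 4, ← Real.rpow_neg h1k.le]; norm_num
    have key : ‖χ e‖ ^ 2 * (1 + e) * (1 + ‖k‖)^4 ≤ D ^ 2 := by
      have h5 : ((1+e)^3 * ‖χ e‖)^2 ≤ D^2 := by
        apply sq_le_sq' _ hd; nlinarith [mul_nonneg (pow_nonneg h1e.le 3) hnn]
      have hmono : (1 + ‖k‖)^4 ≤ (1+e)^4 :=
        pow_le_pow_left₀ (by positivity) (by linarith) 4
      calc ‖χ e‖ ^ 2 * (1 + e) * (1 + ‖k‖)^4
          ≤ ‖χ e‖ ^ 2 * (1 + e) * (1+e)^4 := by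
            apply mul_le_mul_of_nonneg_left hmono; positivity
        _ ≤ ‖χ e‖^2 * (1+e)^6 := by nlinarith [pow_nonneg h1e.le 4, sq_nonneg (‖χ e‖)]
        _ = ((1+e)^3 * ‖χ e‖)^2 := by ring
        _ ≤ D^2 := h5
    have hfin : ‖χ e‖ ^ 2 * (1 + e) ≤ D ^ 2 * ((1 + ‖k‖) ^ (4:ℕ))⁻¹ := by
      rw [← div_eq_mul_inv, le_div_iff₀ (by positivity)]
      exact key
    calc ‖‖χ e‖ ^ 2 * (1 + e)‖ = ‖χ e‖ ^ 2 * (1 + e) := by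
          rw [Real.norm_eq_abs, abs_of_nonneg (by positivity)]
      _ ≤ D ^ 2 * ((1 + ‖k‖) ^ (4:ℕ))⁻¹ := hfin
      _ = D ^ 2 * (1 + ‖k‖) ^ (-(4:ℝ)) := by rw [h1]

def cst : ℝ := (((2 * Real.pi) ^ (3:ℕ) : ℝ) ^ (-(1:ℝ)/2) : ℝ)

lemma two_pi_cube_pos : (0:ℝ) < (2 * Real.pi) ^ (3:ℕ) := by positivity
lemma cst_pos : 0 < cst := Real.rpow_pos_of_pos two_pi_cube_pos _
lemma cst_sq : cst ^ 2 = (((2 * Real.pi) ^ (3:ℕ) : ℝ))⁻¹ := by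
  unfold cst
  rw [← Real.rpow_natCast (((2 * Real.pi) ^ (3:ℕ) : ℝ) ^ (-(1:ℝ)/2)) 2,
    ← Real.rpow_mul two_pi_cube_pos.le]
  norm_num
  exact Real.rpow_neg_one _

lemma integrable_of_bound (χ : SchwartzMap ℝ ℂ) {E : Type*} [NormedAddCommGroup E]
    {f : V3 → E} (hf : AEStronglyMeasurable f (volume : Measure V3)) (C : ℝ)
    (h : ∀ k, ‖f k‖ ≤ C * (‖χ (enorm3 k)‖ ^ 2 * (1 + enorm3 k))) :
    Integrable f (volume : Measure V3) :=
  ((master_integrable χ).const_mul C).mono' hf (by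
    filter_upwards with k
    exact h k)

lemma ratio_abs_le (k : V3) (m : Fin 3) (i : Fin 3) :
    |crossProduct k (stdb m) i / enorm3 k| ≤ 1 := by
  rcases eq_or_ne (enorm3 k) 0 with h | h
  · have hk : k = 0 := enorm3_eq_zero h
    subst hk
    fin_cases m <;> fin_cases i <;> simp [crossProduct, stdb]
  · rw [abs_div, abs_of_nonneg (enorm3_nonneg k),
      div_le_one (lt_of_le_of_ne (enorm3_nonneg k) (Ne.symm h))]
    have hcp : ∀ j, |crossProduct k (stdb m) j| ≤ enorm3 k := by
      intro j
      fin_cases m <;> fin_cases j <;>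
        simp [crossProduct, stdb, abs_neg] <;>
        first
          | exact enorm3_nonneg k
          | exact abs_le_enorm3 k _
          | (rw [abs_neg]; exact abs_le_enorm3 k _)
    exact hcp i

lemma norm_exp_neg_I_mul (t : ℝ) : ‖Complex.exp (-Complex.I * (t:ℝ))‖ = 1 := by
  rw [show -Complex.I * (t:ℝ) = ((-t : ℝ):ℂ) * Complex.I by push_cast; ring]
  rw [Complex.norm_exp_ofReal_mul_I]

lemma Bf_norm_le (χ : SchwartzMap ℝ ℂ) (m : Fin 3) (x : V3) (k : V3) (i : Fin 3) :
    ‖Bf χ m x k i‖ ≤ cst * ‖χ (enorm3 k)‖ * Real.sqrt (enorm3 k) := by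
  unfold Bf
  rw [norm_mul, norm_mul, norm_mul, norm_mul, norm_mul]
  rw [Complex.norm_I, norm_exp_neg_I_mul, Complex.norm_real, Complex.norm_real, Complex.norm_real]
  have h1 : ‖cst‖ = cst := by rw [Real.norm_eq_abs, abs_of_nonneg cst_pos.le]
  have h2 : ‖Real.sqrt (enorm3 k)‖ = Real.sqrt (enorm3 k) := by
    rw [Real.norm_eq_abs, abs_of_nonneg (Real.sqrt_nonneg _)]
  calc 1 * ‖cst‖ * ‖χ (enorm3 k)‖ * ‖Real.sqrt (enorm3 k)‖ * 1
        * ‖crossProduct k (stdb m) i / enorm3 k‖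
      = (cst * ‖χ (enorm3 k)‖ * Real.sqrt (enorm3 k)) * |crossProduct k (stdb m) i / enorm3 k| := by
        rw [h1, h2, Real.norm_eq_abs]; ring
    _ ≤ (cst * ‖χ (enorm3 k)‖ * Real.sqrt (enorm3 k)) * 1 := by
        apply mul_le_mul_of_nonneg_left (ratio_abs_le k m i)
        have := cst_pos
        positivity
    _ = cst * ‖χ (enorm3 k)‖ * Real.sqrt (enorm3 k) := mul_one _

lemma measurable_Bf_comp (χ : SchwartzMap ℝ ℂ) (m : Fin 3) (x : V3) (i : Fin 3) :
    Measurable (fun k : V3 => Bf χ m x k i) := by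
  unfold Bf
  apply Measurable.mul
  · apply Measurable.mul
    · apply Measurable.mul
      · apply Measurable.mul
        · exact measurable_const
        · exact (χ.continuous.comp continuous_enorm3).measurable
      · exact (Complex.continuous_ofReal.comp
          (Real.continuous_sqrt.comp continuous_enorm3)).measurable
    · exact (Complex.continuous_exp.comp (continuous_const.mul
        (Complex.continuous_ofReal.comp (continuous_dot3 x)))).measurable
  · exact Complex.measurable_ofReal.comp
      ((continuous_cross (stdb m) i).measurable.div continuous_enorm3.measurable)

lemma aesm_Bf (χ : SchwartzMap ℝ ℂ) (m : Fin 3) (x : V3) :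
    AEStronglyMeasurable (Bf χ m x) (volume : Measure V3) := by
  apply Measurable.aestronglyMeasurable
  exact measurable_pi_lambda _ (fun i => measurable_Bf_comp χ m x i)

lemma sqrt_bound_memLp (χ : SchwartzMap ℝ ℂ) (a : ℝ) (ha : 0 ≤ a) :
    MemLp (fun k : V3 => a * (‖χ (enorm3 k)‖ * Real.sqrt (enorm3 k))) 2 (volume : Measure V3) := by
  have hmeas : AEStronglyMeasurable
      (fun k : V3 => a * (‖χ (enorm3 k)‖ * Real.sqrt (enorm3 k))) (volume : Measure V3) := by
    apply Continuous.aestronglyMeasurable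
    exact continuous_const.mul (((continuous_norm.comp (χ.continuous.comp continuous_enorm3))).mul
      (Real.continuous_sqrt.comp continuous_enorm3))
  rw [memLp_two_iff_integrable_sq hmeas]
  apply integrable_of_bound χ
  · apply Continuous.aestronglyMeasurable
    exact (continuous_const.mul (((continuous_norm.comp (χ.continuous.comp continuous_enorm3))).mul
      (Real.continuous_sqrt.comp continuous_enorm3))).pow 2
  · intro k
    have he := enorm3_nonneg k
    have hs : Real.sqrt (enorm3 k) ^ 2 = enorm3 k := Real.sq_sqrt he
    have hnn : (0:ℝ) ≤ ‖χ (enorm3 k)‖ := norm_nonneg _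
    rw [Real.norm_eq_abs, abs_of_nonneg (by positivity)]
    calc (a * (‖χ (enorm3 k)‖ * Real.sqrt (enorm3 k))) ^ 2
        = a ^ 2 * (‖χ (enorm3 k)‖ ^ 2 * Real.sqrt (enorm3 k) ^ 2) := by ring
      _ = a ^ 2 * (‖χ (enorm3 k)‖ ^ 2 * enorm3 k) := by rw [hs]
      _ ≤ a ^ 2 * (‖χ (enorm3 k)‖ ^ 2 * (1 + enorm3 k)) := by nlinarith [sq_nonneg (‖χ (enorm3 k)‖), sq_nonneg a]

lemma memLp_Bf (χ : SchwartzMap ℝ ℂ) (m : Fin 3) (x : V3) :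
    MemLp (Bf χ m x) 2 (volume : Measure V3) := by
  apply MemLp.of_le (sqrt_bound_memLp χ cst cst_pos.le) (aesm_Bf χ m x)
  filter_upwards with k
  have hb : (0:ℝ) ≤ cst * (‖χ (enorm3 k)‖ * Real.sqrt (enorm3 k)) := by
    have := cst_pos
    positivity
  rw [pi_norm_le_iff_of_nonneg (by rw [Real.norm_eq_abs, abs_of_nonneg hb]; exact hb)]
  intro i
  rw [Real.norm_eq_abs, abs_of_nonneg hb]
  calc ‖Bf χ m x k i‖ ≤ cst * ‖χ (enorm3 k)‖ * Real.sqrt (enorm3 k) := Bf_norm_le χ m x k i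
    _ = cst * (‖χ (enorm3 k)‖ * Real.sqrt (enorm3 k)) := by ring

lemma Ef_norm_le (χ : SchwartzMap ℝ ℂ) (m : Fin 3) (x : V3) (k : V3) (i : Fin 3) :
    ‖Ef χ m x k i‖ ≤ 2 * cst * ‖χ (enorm3 k)‖ * Real.sqrt (enorm3 k) := by
  have he := enorm3_nonneg k
  have hnn : (0:ℝ) ≤ ‖χ (enorm3 k)‖ := norm_nonneg _
  have hM : (0:ℝ) ≤ cst * ‖χ (enorm3 k)‖ * Real.sqrt (enorm3 k) := by
    have := cst_pos; positivity
  rcases eq_or_ne (enorm3 k) 0 with h | h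
  · unfold Ef
    rw [h]
    simp only [Complex.ofReal_zero, div_zero, norm_zero]
    have := cst_pos
    positivity
  · have hepos : 0 < enorm3 k := lt_of_le_of_ne he (Ne.symm h)
    have hcross : ‖crossC k (Bf χ m x k) i‖
        ≤ 2 * enorm3 k * (cst * ‖χ (enorm3 k)‖ * Real.sqrt (enorm3 k)) := by
      have hterm : ∀ (a b : Fin 3), ‖(k a : ℂ) * Bf χ m x k b‖
          ≤ enorm3 k * (cst * ‖χ (enorm3 k)‖ * Real.sqrt (enorm3 k)) := by
        intro a b
        rw [norm_mul, Complex.norm_real, Real.norm_eq_abs]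
        exact mul_le_mul (abs_le_enorm3 k a) (Bf_norm_le χ m x k b) (norm_nonneg _) he
      fin_cases i <;>
        · simp only [crossC, crossProduct]
          refine le_trans (norm_sub_le _ _) ?_
          calc ‖_‖ + ‖_‖ ≤ enorm3 k * (cst * ‖χ (enorm3 k)‖ * Real.sqrt (enorm3 k))
                + enorm3 k * (cst * ‖χ (enorm3 k)‖ * Real.sqrt (enorm3 k)) :=
              add_le_add (hterm _ _) (hterm _ _)
            _ = 2 * enorm3 k * (cst * ‖χ (enorm3 k)‖ * Real.sqrt (enorm3 k)) := by ring
    unfold Ef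
    rw [norm_div, Complex.norm_real, Real.norm_eq_abs, abs_of_nonneg he]
    rw [div_le_iff₀ hepos]
    calc ‖crossC k (Bf χ m x k) i‖
        ≤ 2 * enorm3 k * (cst * ‖χ (enorm3 k)‖ * Real.sqrt (enorm3 k)) := hcross
      _ = 2 * cst * ‖χ (enorm3 k)‖ * Real.sqrt (enorm3 k) * enorm3 k := by ring

lemma measurable_Ef_comp (χ : SchwartzMap ℝ ℂ) (m : Fin 3) (x : V3) (i : Fin 3) :
    Measurable (fun k : V3 => Ef χ m x k i) := by
  unfold Ef
  apply Measurable.div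
  · have hbase : ∀ (a b : Fin 3), Measurable (fun k : V3 => (k a : ℂ) * Bf χ m x k b) :=
      fun a b => (Complex.measurable_ofReal.comp (measurable_pi_apply a)).mul
        (measurable_Bf_comp χ m x b)
    fin_cases i <;>
      · simp only [crossC, crossProduct]
        exact (hbase _ _).sub (hbase _ _)
  · exact Complex.measurable_ofReal.comp continuous_enorm3.measurable

lemma aesm_Ef (χ : SchwartzMap ℝ ℂ) (m : Fin 3) (x : V3) :
    AEStronglyMeasurable (Ef χ m x) (volume : Measure V3) :=
  Measurable.aestronglyMeasurable
    (measurable_pi_lambda _ (fun i => measurable_Ef_comp χ m x i))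

lemma memLp_Ef (χ : SchwartzMap ℝ ℂ) (m : Fin 3) (x : V3) :
    MemLp (Ef χ m x) 2 (volume : Measure V3) := by
  apply MemLp.of_le (sqrt_bound_memLp χ (2 * cst) (by have := cst_pos; positivity)) (aesm_Ef χ m x)
  filter_upwards with k
  have hb : (0:ℝ) ≤ 2 * cst * (‖χ (enorm3 k)‖ * Real.sqrt (enorm3 k)) := by
    have := cst_pos; positivity
  rw [pi_norm_le_iff_of_nonneg (by rw [Real.norm_eq_abs, abs_of_nonneg hb]; exact hb)]
  intro i
  rw [Real.norm_eq_abs, abs_of_nonneg hb]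
  calc ‖Ef χ m x k i‖ ≤ 2 * cst * ‖χ (enorm3 k)‖ * Real.sqrt (enorm3 k) := Ef_norm_le χ m x k i
    _ = 2 * cst * (‖χ (enorm3 k)‖ * Real.sqrt (enorm3 k)) := by ring

lemma cont_chi_sq (χ : SchwartzMap ℝ ℂ) :
    Continuous (fun k : V3 => ‖χ (enorm3 k)‖ ^ 2) :=
  ((continuous_norm.comp (χ.continuous.comp continuous_enorm3))).pow 2

lemma chi_sq_nonneg (χ : SchwartzMap ℝ ℂ) (k : V3) : (0:ℝ) ≤ ‖χ (enorm3 k)‖ ^ 2 := sq_nonneg _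

lemma integrable_cos (χ : SchwartzMap ℝ ℂ) (x : V3) :
    Integrable (fun k : V3 => ‖χ (enorm3 k)‖ ^ 2 * Real.cos (dot3 k x)) := by
  apply integrable_of_bound χ (C := 1)
  · exact ((cont_chi_sq χ).mul (Real.continuous_cos.comp (continuous_dot3 x))).aestronglyMeasurable
  · intro k
    have h1 : |Real.cos (dot3 k x)| ≤ 1 := Real.abs_cos_le_one _
    have he := enorm3_nonneg k
    rw [Real.norm_eq_abs, abs_mul, abs_of_nonneg (chi_sq_nonneg χ k), one_mul]
    nlinarith [chi_sq_nonneg χ k]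

lemma integrable_sin_k (χ : SchwartzMap ℝ ℂ) (x : V3) (i : Fin 3) :
    Integrable (fun k : V3 => ‖χ (enorm3 k)‖ ^ 2 * Real.sin (dot3 k x) * k i) := by
  apply integrable_of_bound χ (C := 1)
  · exact (((cont_chi_sq χ).mul (Real.continuous_sin.comp (continuous_dot3 x))).mul
      (continuous_apply i)).aestronglyMeasurable
  · intro k
    have h1 : |Real.sin (dot3 k x)| ≤ 1 := Real.abs_sin_le_one _
    have h2 : |k i| ≤ enorm3 k := abs_le_enorm3 k i
    have he := enorm3_nonneg k
    rw [Real.norm_eq_abs, abs_mul, abs_mul, abs_of_nonneg (chi_sq_nonneg χ k), one_mul]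
    have hki := abs_nonneg (k i)
    nlinarith [chi_sq_nonneg χ k, abs_nonneg (Real.sin (dot3 k x)),
      mul_le_mul h1 h2 hki (by norm_num : (0:ℝ) ≤ 1)]

-- the continuous linear map k·v as function of v
def dotCLM (k : V3) : V3 →L[ℝ] ℝ := ∑ i : Fin 3, k i • ContinuousLinearMap.proj i

lemma dotCLM_apply (k v : V3) : dotCLM k v = dot3 k v := by
  simp [dotCLM, dot3, ContinuousLinearMap.sum_apply]

lemma dotCLM_norm_le (k : V3) : ‖dotCLM k‖ ≤ 3 * enorm3 k := by
  apply ContinuousLinearMap.opNorm_le_bound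
  · have := enorm3_nonneg k; positivity
  · intro v
    rw [dotCLM_apply]
    have h : ∀ i : Fin 3, |k i * v i| ≤ enorm3 k * ‖v‖ := by
      intro i
      rw [abs_mul]
      apply mul_le_mul (abs_le_enorm3 k i) _ (abs_nonneg _) (enorm3_nonneg k)
      exact norm_le_pi_norm v i
    calc ‖dot3 k v‖ = |∑ i : Fin 3, k i * v i| := rfl
      _ ≤ ∑ i : Fin 3, |k i * v i| := Finset.abs_sum_le_sum_abs _ _
      _ ≤ ∑ _i : Fin 3, enorm3 k * ‖v‖ := Finset.sum_le_sum (fun i _ => h i)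
      _ = 3 * enorm3 k * ‖v‖ := by simp [Finset.sum_const]; ring

lemma continuous_dotCLM : Continuous dotCLM := by
  unfold dotCLM
  exact continuous_finset_sum _ (fun i _ =>
    ((continuous_apply i).smul continuous_const))

def rhoDeriv (χ : SchwartzMap ℝ ℂ) (x : V3) (k : V3) : V3 →L[ℝ] ℝ :=
  (‖χ (enorm3 k)‖ ^ 2 * -Real.sin (dot3 k x)) • dotCLM k

lemma hasFDeriv_inner (χ : SchwartzMap ℝ ℂ) (k : V3) (x : V3) :
    HasFDerivAt (fun x => ‖χ (enorm3 k)‖ ^ 2 * Real.cos (dot3 k x))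
      (rhoDeriv χ x k) x := by
  have hdot : HasFDerivAt (fun x : V3 => dot3 k x) (dotCLM k) x := by
    have : ∀ i : Fin 3, HasFDerivAt (fun x : V3 => k i * x i)
        (k i • ContinuousLinearMap.proj i) x :=
      fun i => ((ContinuousLinearMap.proj i : V3 →L[ℝ] ℝ).hasFDerivAt).const_mul (k i)
    exact HasFDerivAt.fun_sum (fun i _ => this i)
  have hcos : HasFDerivAt (fun x : V3 => Real.cos (dot3 k x))
      ((-Real.sin (dot3 k x)) • dotCLM k) x :=
    (Real.hasDerivAt_cos (dot3 k x)).comp_hasFDerivAt x hdot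
  have := hcos.const_mul (‖χ (enorm3 k)‖ ^ 2)
  unfold rhoDeriv
  rw [mul_smul]
  exact this

lemma rhoDeriv_norm_le (χ : SchwartzMap ℝ ℂ) (x : V3) (k : V3) :
    ‖rhoDeriv χ x k‖ ≤ 3 * (‖χ (enorm3 k)‖ ^ 2 * (1 + enorm3 k)) := by
  unfold rhoDeriv
  rw [norm_smul (‖χ (enorm3 k)‖ ^ 2 * -Real.sin (dot3 k x)) (dotCLM k)]
  have h1 : ‖‖χ (enorm3 k)‖ ^ 2 * -Real.sin (dot3 k x)‖ ≤ ‖χ (enorm3 k)‖ ^ 2 := by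
    rw [Real.norm_eq_abs, abs_mul, abs_of_nonneg (chi_sq_nonneg χ k), abs_neg]
    nlinarith [Real.abs_sin_le_one (dot3 k x), chi_sq_nonneg χ k]
  have h2 := dotCLM_norm_le k
  have he := enorm3_nonneg k
  have hc := chi_sq_nonneg χ k
  calc ‖‖χ (enorm3 k)‖ ^ 2 * -Real.sin (dot3 k x)‖ * ‖dotCLM k‖
      ≤ ‖χ (enorm3 k)‖ ^ 2 * (3 * enorm3 k) := by
        apply mul_le_mul h1 h2 (norm_nonneg _) hc
    _ ≤ 3 * (‖χ (enorm3 k)‖ ^ 2 * (1 + enorm3 k)) := by nlinarith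

lemma aesm_rhoDeriv (χ : SchwartzMap ℝ ℂ) (x : V3) :
    AEStronglyMeasurable (rhoDeriv χ x) (volume : Measure V3) := by
  apply Continuous.aestronglyMeasurable
  exact ((cont_chi_sq χ).mul ((Real.continuous_sin.comp (continuous_dot3 x)).neg)).smul
    continuous_dotCLM

lemma integrable_rhoDeriv (χ : SchwartzMap ℝ ℂ) (x : V3) :
    Integrable (rhoDeriv χ x) (volume : Measure V3) :=
  integrable_of_bound χ (aesm_rhoDeriv χ x) 3 (rhoDeriv_norm_le χ x)

lemma hasFDerivAt_integral (χ : SchwartzMap ℝ ℂ) (x₀ : V3) :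
    HasFDerivAt (fun x => ∫ k : V3, ‖χ (enorm3 k)‖ ^ 2 * Real.cos (dot3 k x))
      (∫ k : V3, rhoDeriv χ x₀ k) x₀ := by
  apply hasFDerivAt_integral_of_dominated_of_fderiv_le
    (F' := fun x k => rhoDeriv χ x k) (bound := fun k => 3 * (‖χ (enorm3 k)‖ ^ 2 * (1 + enorm3 k)))
    (s := Set.univ) Filter.univ_mem
  · filter_upwards with x
    exact ((cont_chi_sq χ).mul (Real.continuous_cos.comp (continuous_dot3 x))).aestronglyMeasurable
  · exact integrable_cos χ x₀
  · exact aesm_rhoDeriv χ x₀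
  · filter_upwards with k
    intro x _
    exact rhoDeriv_norm_le χ x k
  · exact (master_integrable χ).const_mul 3
  · filter_upwards with k
    intro x _
    exact hasFDeriv_inner χ k x

lemma hasFDerivAt_rho (χ : SchwartzMap ℝ ℂ) (x₀ : V3) :
    HasFDerivAt (rho χ)
      ((((2 * Real.pi) ^ (3:ℕ) : ℝ))⁻¹ • (∫ k : V3, rhoDeriv χ x₀ k)) x₀ := by
  unfold rho
  exact (hasFDerivAt_integral χ x₀).const_mul _

lemma fderiv_rho_eval (χ : SchwartzMap ℝ ℂ) (x v : V3) :
    fderiv ℝ (rho χ) x v = dot3 (gradRho χ x) v := by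
  rw [(hasFDerivAt_rho χ x).fderiv]
  rw [ContinuousLinearMap.smul_apply]
  rw [ContinuousLinearMap.integral_apply (integrable_rhoDeriv χ x) v]
  have hpt : ∀ k : V3, rhoDeriv χ x k v
      = ∑ i : Fin 3, -(‖χ (enorm3 k)‖ ^ 2 * Real.sin (dot3 k x) * k i * v i) := by
    intro k
    unfold rhoDeriv
    rw [ContinuousLinearMap.smul_apply, dotCLM_apply]
    unfold dot3
    rw [smul_eq_mul, Finset.mul_sum]
    apply Finset.sum_congr rfl
    intro i _
    ring
  rw [integral_congr_ae (Filter.Eventually.of_forall hpt)]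
  rw [integral_finset_sum]
  · unfold gradRho dot3
    rw [smul_eq_mul, Finset.mul_sum]
    apply Finset.sum_congr rfl
    intro i _
    rw [integral_neg, integral_mul_const]
    ring
  · intro i _
    exact ((integrable_sin_k χ x i).mul_const (v i)).neg

lemma differentiableAt_rho (χ : SchwartzMap ℝ ℂ) (x : V3) :
    DifferentiableAt ℝ (rho χ) x :=
  (hasFDerivAt_rho χ x).differentiableAt

-- R1 : the key vector identity
lemma cross_cross_dot (k : V3) (m n : Fin 3) :
    ∑ i : Fin 3, crossProduct k (crossProduct k (stdb m)) i * crossProduct k (stdb n) i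
      = (∑ j : Fin 3, k j ^ 2) * dot3 k (crossProduct (stdb m) (stdb n)) := by
  fin_cases m <;> fin_cases n <;>
    simp [crossProduct, stdb, dot3, Fin.sum_univ_three] <;> ring

-- L2 : cross with pointwise-divided vector
lemma cross_div (k w : V3) (e : ℝ) (i : Fin 3) :
    crossProduct k (fun j => w j / e) i = crossProduct k w i / e := by
  fin_cases i <;> simp [crossProduct] <;> ring

-- crossC with scalar multiple of a real vector
lemma crossC_smul_real (k : V3) (c : ℂ) (w : V3) (i : Fin 3) :
    crossC k (fun j => c * ((w j : ℝ) : ℂ)) i = c * ((crossProduct k w i : ℝ) : ℂ) := by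
  fin_cases i <;> simp [crossC, crossProduct] <;> push_cast <;> ring

lemma Bf_eq (χ : SchwartzMap ℝ ℂ) (m : Fin 3) (x : V3) (k : V3) :
    Bf χ m x k = fun j =>
      (Complex.I * (cst : ℂ) * χ (enorm3 k) * ((Real.sqrt (enorm3 k) : ℝ) : ℂ)
        * Complex.exp (-Complex.I * ((dot3 k x : ℝ) : ℂ)))
      * (((crossProduct k (stdb m) j / enorm3 k : ℝ)) : ℂ) := rfl

lemma enorm3_zero : enorm3 (0 : V3) = 0 := by simp [enorm3]
lemma dot3_zero_left (x : V3) : dot3 (0 : V3) x = 0 := by simp [dot3]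

lemma EB_pointwise (χ : SchwartzMap ℝ ℂ) (x y : V3) (m n : Fin 3) (k : V3) :
    (∑ i : Fin 3, Ef χ m x k i * (starRingEnd ℂ) (Bf χ n y k i))
      = ((cst ^ 2 * ‖χ (enorm3 k)‖ ^ 2 : ℝ) : ℂ)
          * Complex.exp (-Complex.I * ((dot3 k x - dot3 k y : ℝ) : ℂ))
          * ((dot3 k (crossProduct (stdb m) (stdb n)) : ℝ) : ℂ) := by
  rcases eq_or_ne (enorm3 k) 0 with h0 | hne
  · have hk : k = 0 := enorm3_eq_zero h0
    subst hk
    simp [Ef, Bf, crossC, enorm3_zero, dot3_zero_left]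
  · set e := enorm3 k with he
    have he0 : 0 < e := lt_of_le_of_ne (enorm3_nonneg k) (Ne.symm hne)
    set s := Real.sqrt e with hs
    have hss : s * s = e := Real.mul_self_sqrt he0.le
    set χe := χ e with hχe
    set A := Complex.I * (cst : ℂ) * χe * ((s : ℝ) : ℂ)
        * Complex.exp (-Complex.I * ((dot3 k x : ℝ) : ℂ)) with hA
    set A' := Complex.I * (cst : ℂ) * χe * ((s : ℝ) : ℂ)
        * Complex.exp (-Complex.I * ((dot3 k y : ℝ) : ℂ)) with hA'
    set p := fun j => crossProduct k (stdb n) j with hp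
    set q := fun j => crossProduct k (crossProduct k (stdb m)) j with hq
    have hec : ((e : ℝ) : ℂ) ≠ 0 := Complex.ofReal_ne_zero.mpr hne
    -- compute crossC of Bf
    have hcross : ∀ i, crossC k (Bf χ m x k) i = A * ((q i / e : ℝ) : ℂ) := by
      intro i
      rw [Bf_eq]
      rw [crossC_smul_real k A (fun j => crossProduct k (stdb m) j / e) i]
      rw [cross_div]
    -- each summand
    have hterm : ∀ i, Ef χ m x k i * (starRingEnd ℂ) (Bf χ n y k i)
        = (A * (starRingEnd ℂ) A') * (((q i * p i : ℝ)) : ℂ) / ((e : ℝ) : ℂ) ^ 3 := by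
      intro i
      have hEf : Ef χ m x k i = A * ((q i / e : ℝ) : ℂ) / ((e : ℝ) : ℂ) := by
        unfold Ef; rw [hcross i]
      have hBf' : (starRingEnd ℂ) (Bf χ n y k i)
          = (starRingEnd ℂ) A' * ((p i / e : ℝ) : ℂ) := by
        rw [Bf_eq]
        rw [map_mul, Complex.conj_ofReal]
      rw [hEf, hBf']
      push_cast
      field_simp
    rw [Finset.sum_congr rfl (fun i _ => hterm i)]
    rw [← Finset.sum_div, ← Finset.mul_sum]
    have hsum : (∑ i : Fin 3, (((q i * p i : ℝ)) : ℂ))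
        = (((e ^ 2 * dot3 k (crossProduct (stdb m) (stdb n)) : ℝ)) : ℂ) := by
      rw [← Complex.ofReal_sum]
      congr 1
      simp only [hq, hp]
      rw [cross_cross_dot k m n]
      congr 1
      exact (enorm3_sq k).symm
    rw [hsum]
    -- compute A * conj A'
    have hssC : ((s:ℝ):ℂ) * ((s:ℝ):ℂ) = ((e:ℝ):ℂ) := by
      rw [← Complex.ofReal_mul, hss]
    have hrepl : ((cst ^ 2 * ‖χe‖ ^ 2 * e : ℝ) : ℂ)
        = ((cst:ℂ) * (cst:ℂ)) * (χe * (starRingEnd ℂ) χe) * (((s:ℝ):ℂ) * ((s:ℝ):ℂ)) := by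
      rw [Complex.mul_conj', hssC]
      push_cast
      ring
    have hAA : A * (starRingEnd ℂ) A'
        = ((cst ^ 2 * ‖χe‖ ^ 2 * e : ℝ) : ℂ)
            * Complex.exp (-Complex.I * ((dot3 k x : ℝ) : ℂ))
            * Complex.exp (Complex.I * ((dot3 k y : ℝ) : ℂ)) := by
      rw [hA, hA', map_mul, map_mul, map_mul, map_mul]
      rw [Complex.conj_I, Complex.conj_ofReal, Complex.conj_ofReal, ← Complex.exp_conj,
        map_mul, map_neg, Complex.conj_I, Complex.conj_ofReal]
      rw [hrepl]
      simp only [neg_mul, neg_neg]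
      ring_nf
      linear_combination (-(↑cst ^ 2 * χe * (↑s:ℂ) ^ 2 * Complex.exp (-(Complex.I * ↑(dot3 k x))) * (starRingEnd ℂ) χe *
        Complex.exp (Complex.I * ↑(dot3 k y)))) * Complex.I_sq
    rw [hAA]
    have hexp : Complex.exp (-Complex.I * ((dot3 k x - dot3 k y : ℝ) : ℂ))
        = Complex.exp (-Complex.I * ((dot3 k x : ℝ) : ℂ))
          * Complex.exp (Complex.I * ((dot3 k y : ℝ) : ℂ)) := by
      rw [← Complex.exp_add]
      congr 1
      push_cast
      ring
    rw [hexp]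
    push_cast
    field_simp

lemma crossProduct_neg_left (k v : V3) (j : Fin 3) :
    crossProduct (-k) v j = -(crossProduct k v j) := by
  fin_cases j <;> simp [crossProduct] <;> ring

lemma BB_neg (χ : SchwartzMap ℝ ℂ) (x y : V3) (m n : Fin 3) (k : V3) :
    (∑ i : Fin 3, Bf χ m x (-k) i * (starRingEnd ℂ) (Bf χ n y (-k) i))
      = (starRingEnd ℂ) (∑ i : Fin 3, Bf χ m x k i * (starRingEnd ℂ) (Bf χ n y k i)) := by
  rw [map_sum]
  apply Finset.sum_congr rfl
  intro i _
  simp only [Bf, enorm3_neg, dot3_neg_left, crossProduct_neg_left]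
  simp only [Complex.ofReal_neg, Complex.ofReal_div, map_mul, map_div₀, map_inv₀, map_neg,
    Complex.conj_I, Complex.conj_ofReal, Complex.conj_conj, ← Complex.exp_conj,
    mul_neg, neg_mul, neg_neg, neg_div]
  ring

lemma abs_cross_stdb_le (m n i : Fin 3) : |crossProduct (stdb m) (stdb n) i| ≤ 1 := by
  fin_cases m <;> fin_cases n <;> fin_cases i <;>
    simp [crossProduct, stdb, Pi.single_apply, Fin.ext_iff] <;> norm_num

lemma abs_dot3_cross_le (k : V3) (m n : Fin 3) :
    |dot3 k (crossProduct (stdb m) (stdb n))| ≤ 3 * enorm3 k := by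
  unfold dot3
  calc |∑ i : Fin 3, k i * crossProduct (stdb m) (stdb n) i|
      ≤ ∑ i : Fin 3, |k i * crossProduct (stdb m) (stdb n) i| := Finset.abs_sum_le_sum_abs _ _
    _ ≤ ∑ _i : Fin 3, enorm3 k := by
        apply Finset.sum_le_sum
        intro i _
        rw [abs_mul]
        calc |k i| * |crossProduct (stdb m) (stdb n) i| ≤ enorm3 k * 1 :=
            mul_le_mul (abs_le_enorm3 k i) (abs_cross_stdb_le m n i) (abs_nonneg _) (enorm3_nonneg k)
          _ = enorm3 k := mul_one _
    _ = 3 * enorm3 k := by simp [Finset.sum_const]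

-- the closed form of the EB integrand
def Gfun (χ : SchwartzMap ℝ ℂ) (z : V3) (m n : Fin 3) (k : V3) : ℂ :=
  ((cst ^ 2 * ‖χ (enorm3 k)‖ ^ 2 : ℝ) : ℂ) * Complex.exp (-Complex.I * ((dot3 k z : ℝ) : ℂ))
    * ((dot3 k (crossProduct (stdb m) (stdb n)) : ℝ) : ℂ)

lemma integrable_G (χ : SchwartzMap ℝ ℂ) (z : V3) (m n : Fin 3) :
    Integrable (Gfun χ z m n) (volume : Measure V3) := by
  refine integrable_of_bound χ ?_ (3 * cst ^ 2) ?_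
  · apply Continuous.aestronglyMeasurable
    apply Continuous.mul
    apply Continuous.mul
    · exact Complex.continuous_ofReal.comp (continuous_const.mul
        (((continuous_norm.comp (χ.continuous.comp continuous_enorm3))).pow 2))
    · exact Complex.continuous_exp.comp (continuous_const.mul
        (Complex.continuous_ofReal.comp (continuous_dot3 z)))
    · exact Complex.continuous_ofReal.comp
        ((continuous_dot3 _).comp (continuous_id))
  · intro k
    unfold Gfun
    have hc := cst_pos
    have he := enorm3_nonneg k
    have hn : (0:ℝ) ≤ ‖χ (enorm3 k)‖ ^ 2 := sq_nonneg _
    rw [norm_mul, norm_mul]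
    have h1 : ‖((cst ^ 2 * ‖χ (enorm3 k)‖ ^ 2 : ℝ) : ℂ)‖ = cst ^ 2 * ‖χ (enorm3 k)‖ ^ 2 := by
      rw [Complex.norm_real, Real.norm_eq_abs, abs_of_nonneg (by positivity)]
    have h2 : ‖Complex.exp (-Complex.I * ((dot3 k z : ℝ) : ℂ))‖ = 1 := by
      rw [show -Complex.I * ((dot3 k z:ℝ):ℂ) = ((-(dot3 k z) : ℝ):ℂ) * Complex.I by push_cast; ring]
      rw [Complex.norm_exp_ofReal_mul_I]
    have h3 : ‖((dot3 k (crossProduct (stdb m) (stdb n)) : ℝ) : ℂ)‖ ≤ 3 * enorm3 k := by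
      rw [Complex.norm_real, Real.norm_eq_abs]
      exact abs_dot3_cross_le k m n
    calc ‖((cst ^ 2 * ‖χ (enorm3 k)‖ ^ 2 : ℝ) : ℂ)‖ * ‖Complex.exp (-Complex.I * ((dot3 k z : ℝ) : ℂ))‖
          * ‖((dot3 k (crossProduct (stdb m) (stdb n)) : ℝ) : ℂ)‖
        ≤ (cst ^ 2 * ‖χ (enorm3 k)‖ ^ 2) * 1 * (3 * enorm3 k) := by
          apply mul_le_mul _ h3 (norm_nonneg _) (by positivity)
          rw [h1, h2]
      _ ≤ 3 * cst ^ 2 * (‖χ (enorm3 k)‖ ^ 2 * (1 + enorm3 k)) := by nlinarith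

lemma EB_final (χ : SchwartzMap ℝ ℂ) (x y : V3) (m n : Fin 3) :
    (innerL2 (Ef χ m x) (Bf χ n y)).im
      = dot3 (gradRho χ (x - y)) (crossProduct (stdb m) (stdb n)) := by
  set z := x - y with hz
  set w := crossProduct (stdb m) (stdb n) with hw
  have hGeq : (fun k : V3 => ∑ i : Fin 3, Ef χ m x k i * (starRingEnd ℂ) (Bf χ n y k i))
      = Gfun χ z m n := by
    funext k
    rw [EB_pointwise χ x y m n k]
    unfold Gfun
    rw [hz, dot3_sub_right]
  have hinner : innerL2 (Ef χ m x) (Bf χ n y) = ∫ k : V3, Gfun χ z m n k := by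
    unfold innerL2
    rw [hGeq]
  rw [hinner]
  have him := integral_im (𝕜 := ℂ) (integrable_G χ z m n)
  rw [show (RCLike.im (∫ k : V3, Gfun χ z m n k) : ℝ) = (∫ k : V3, Gfun χ z m n k).im from rfl] at him
  rw [← him]
  have hIm : ∀ k : V3, RCLike.im (Gfun χ z m n k)
      = ∑ i : Fin 3, (-(cst ^ 2 * w i)) * (‖χ (enorm3 k)‖ ^ 2 * Real.sin (dot3 k z) * k i) := by
    intro k
    have h1 : RCLike.im (Gfun χ z m n k) = (Gfun χ z m n k).im := rfl
    rw [h1]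
    unfold Gfun
    rw [show -Complex.I * ((dot3 k z:ℝ):ℂ) = ((-(dot3 k z) : ℝ):ℂ) * Complex.I by push_cast; ring]
    simp only [Complex.mul_im, Complex.mul_re, Complex.ofReal_re, Complex.ofReal_im,
      Complex.exp_ofReal_mul_I_re, Complex.exp_ofReal_mul_I_im]
    rw [Real.sin_neg, Real.cos_neg]
    have hd : dot3 k w = ∑ i : Fin 3, k i * w i := rfl
    rw [← hw, hd, Finset.mul_sum]
    rw [mul_zero, zero_add]
    apply Finset.sum_congr rfl
    intro i _
    ring
  rw [integral_congr_ae (Filter.Eventually.of_forall hIm)]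
  rw [integral_finset_sum _ (fun i _ => (integrable_sin_k χ z i).const_mul (-(cst ^ 2 * w i)))]
  unfold gradRho dot3
  apply Finset.sum_congr rfl
  intro i _
  rw [integral_const_mul]
  rw [← cst_sq]
  ring

lemma integrable_BB (χ : SchwartzMap ℝ ℂ) (x y : V3) (m n : Fin 3) :
    Integrable (fun k : V3 => ∑ i : Fin 3, Bf χ m x k i * (starRingEnd ℂ) (Bf χ n y k i))
      (volume : Measure V3) := by
  refine integrable_of_bound χ ?_ (3 * cst ^ 2) ?_
  · apply Measurable.aestronglyMeasurable
    apply Finset.measurable_sum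
    intro i _
    exact (measurable_Bf_comp χ m x i).mul (((RCLike.continuous_conj (K := ℂ)).measurable).comp (measurable_Bf_comp χ n y i))
  · intro k
    have hc := cst_pos
    have he := enorm3_nonneg k
    have hs : Real.sqrt (enorm3 k) ^ 2 = enorm3 k := Real.sq_sqrt he
    have hterm : ∀ i : Fin 3, ‖Bf χ m x k i * (starRingEnd ℂ) (Bf χ n y k i)‖
        ≤ cst ^ 2 * (‖χ (enorm3 k)‖ ^ 2 * enorm3 k) := by
      intro i
      rw [norm_mul, RCLike.norm_conj]
      calc ‖Bf χ m x k i‖ * ‖Bf χ n y k i‖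
          ≤ (cst * ‖χ (enorm3 k)‖ * Real.sqrt (enorm3 k)) * (cst * ‖χ (enorm3 k)‖ * Real.sqrt (enorm3 k)) := by
            apply mul_le_mul (Bf_norm_le χ m x k i) (Bf_norm_le χ n y k i) (norm_nonneg _)
            positivity
        _ = cst ^ 2 * (‖χ (enorm3 k)‖ ^ 2 * Real.sqrt (enorm3 k) ^ 2) := by ring
        _ = cst ^ 2 * (‖χ (enorm3 k)‖ ^ 2 * enorm3 k) := by rw [hs]
    calc ‖∑ i : Fin 3, Bf χ m x k i * (starRingEnd ℂ) (Bf χ n y k i)‖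
        ≤ ∑ i : Fin 3, ‖Bf χ m x k i * (starRingEnd ℂ) (Bf χ n y k i)‖ := norm_sum_le _ _
      _ ≤ ∑ _i : Fin 3, cst ^ 2 * (‖χ (enorm3 k)‖ ^ 2 * enorm3 k) :=
          Finset.sum_le_sum (fun i _ => hterm i)
      _ = 3 * (cst ^ 2 * (‖χ (enorm3 k)‖ ^ 2 * enorm3 k)) := by simp [Finset.sum_const]
      _ ≤ 3 * cst ^ 2 * (‖χ (enorm3 k)‖ ^ 2 * (1 + enorm3 k)) := by nlinarith [sq_nonneg (‖χ (enorm3 k)‖), sq_nonneg cst]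

lemma BB_final (χ : SchwartzMap ℝ ℂ) (x y : V3) (m n : Fin 3) :
    (innerL2 (Bf χ m x) (Bf χ n y)).im = 0 := by
  unfold innerL2
  have him := integral_im (𝕜 := ℂ) (integrable_BB χ x y m n)
  rw [show (RCLike.im (∫ k : V3, ∑ i : Fin 3, Bf χ m x k i * (starRingEnd ℂ) (Bf χ n y k i)) : ℝ)
      = (∫ k : V3, ∑ i : Fin 3, Bf χ m x k i * (starRingEnd ℂ) (Bf χ n y k i)).im from rfl] at him
  rw [← him]
  set g := fun k : V3 => RCLike.im (∑ i : Fin 3, Bf χ m x k i * (starRingEnd ℂ) (Bf χ n y k i)) with hg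
  have hodd : ∀ k, g (-k) = -g k := by
    intro k
    rw [hg]
    simp only
    rw [BB_neg χ x y m n k]
    exact Complex.conj_im _
  have h1 : ∫ k : V3, g (-k) = ∫ k : V3, g k := integral_neg_eq_self g volume
  have h2 : ∫ k : V3, g (-k) = -∫ k : V3, g k := by
    rw [integral_congr_ae (Filter.Eventually.of_forall hodd), integral_neg]
  have h3 : ∫ k : V3, g k = -∫ k : V3, g k := h1.symm.trans h2
  linarith

theorem field_elements_L2_and_poisson_brackets (χ : SchwartzMap ℝ ℂ) :
    -- (a) the field elements are square integrable
    (∀ (m : Fin 3) (x : V3), MemLp (Bf χ m x) 2 (volume : Measure V3)) ∧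
    (∀ (m : Fin 3) (x : V3), MemLp (Ef χ m x) 2 (volume : Measure V3)) ∧
    -- (b) `ρ` is well defined and differentiable, with gradient `gradRho`
    (∀ x : V3, Integrable (fun k : V3 => ‖χ (enorm3 k)‖ ^ 2 * Real.cos (dot3 k x))) ∧
    (∀ (x : V3) (i : Fin 3),
      Integrable (fun k : V3 => ‖χ (enorm3 k)‖ ^ 2 * Real.sin (dot3 k x) * k i)) ∧
    (∀ x : V3, DifferentiableAt ℝ (rho χ) x) ∧
    (∀ x v : V3, fderiv ℝ (rho χ) x v = dot3 (gradRho χ x) v) ∧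
    -- (c) the Poisson-bracket identities
    (∀ (x y : V3) (m n : Fin 3),
      (innerL2 (Ef χ m x) (Bf χ n y)).im
        = dot3 (gradRho χ (x - y)) (crossProduct (stdb m) (stdb n))) ∧
    (∀ (x y : V3) (m n : Fin 3),
      (innerL2 (Bf χ m x) (Bf χ n y)).im = 0) := by
  exact ⟨memLp_Bf χ, memLp_Ef χ, integrable_cos χ, integrable_sin_k χ, differentiableAt_rho χ,
    fderiv_rho_eval χ, EB_final χ, BB_final χ⟩

end
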